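/- Lower bound on non-pairing-off resonances for $N = 2p$: let $N = 2p$ with $p$ an odd prime, and let $\rho(x) = \sum_{k=1}^{N-1}\rho_k x^k$ be an integer polynomial with $\rho(\zeta) \in \mathbb{R}$ ($\zeta = e^{i\pi/N}$) and $\rho'(1) \equiv 0 \pmod{N}$. If $\rho$ is not trivially real (i.e., not of the form $\sum_{k=1}^{p-1}\lambda_k(x^k - x^{N-k})$), then $M(\rho) = \sum_k |\rho_k| \ge N$. -/

import Mathlib

open Polynomial Finset

lemma sum_range_two_mul {M : Type*} [AddCommMonoid M] (f : ℕ → M) (n : ℕ) :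
    ∑ i ∈ range (2*n), f i
      = ∑ j ∈ range n, f (2*j) + ∑ j ∈ range n, f (2*j+1) := by
  induction n with
  | zero => simp
  | succ n ih =>
    have h2 : 2*(n+1) = (2*n+1)+1 := by ring
    rw [h2, Finset.sum_range_succ, Finset.sum_range_succ, ih,
      Finset.sum_range_succ, Finset.sum_range_succ]
    ring_nf
    abel

lemma deriv_eval_one (ρ : ℤ[X]) (n : ℕ) (h : ρ.natDegree < n) :
    ρ.derivative.eval 1 = ∑ i ∈ range n, ρ.coeff i * i := by
  conv_lhs => rw [ρ.as_sum_range' n h]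
  rw [derivative_sum, Polynomial.eval_finset_sum]
  refine Finset.sum_congr rfl fun i _ => ?_
  simp [Polynomial.derivative_monomial]

lemma key (p : ℕ) (hp : p.Prime) (hodd : Odd p) (ζ : ℂ)
    (hζ : ζ = Complex.exp (Real.pi * Complex.I / (2*p : ℕ))) (ρ : ℤ[X])
    (hdeg : ρ.natDegree < 2*p) (hconst : ρ.coeff 0 = 0)
    (hreal : ∃ r : ℝ, Polynomial.aeval ζ ρ = (r : ℂ)) :
    ∃ c : ℤ, (∀ j < p, ρ.coeff (2*j+1) + ρ.coeff (2*p - (2*j+1)) = (-1)^j * c) ∧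
      (∀ j, 1 ≤ j → j < p → ρ.coeff (2*j) + ρ.coeff (2*p - 2*j) = 0) := by
  have hp3 : 3 ≤ p := by
    have h2 := hp.two_le
    rcases Nat.lt_or_ge p 3 with h | h
    · interval_cases p
      exact absurd hodd (by decide)
    · exact h
  have hppos : 0 < p := by omega
  -- ζ is a primitive 4p-th root of unity
  have hζprim : IsPrimitiveRoot ζ (4*p) := by
    have h0 : (4*p : ℕ) ≠ 0 := by positivity
    have := Complex.isPrimitiveRoot_exp (4*p) h0
    convert this using 2
    rw [hζ]
    congr 1
    have h4 : ((4*p : ℕ) : ℂ) ≠ 0 := by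
      simp only [ne_eq, Nat.cast_eq_zero]; omega
    field_simp
    push_cast
    have hp0 : (p:ℂ) ≠ 0 := by exact_mod_cast hppos.ne'
    ring_nf
    simp [hp0]
  have hζ0 : ζ ≠ 0 := by rw [hζ]; exact Complex.exp_ne_zero _
  -- ζ^(2p) = -1
  have hζ2p : ζ^(2*p) = -1 := by
    rw [hζ, ← Complex.exp_nat_mul]
    have : (2*p : ℕ) * (Real.pi * Complex.I / (2*p : ℕ)) = Real.pi * Complex.I := by
      have hpne : ((2*p : ℕ) : ℂ) ≠ 0 := by
        simp only [ne_eq, Nat.cast_eq_zero]; omega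
      rw [mul_div_assoc', mul_comm, mul_div_assoc, div_self hpne, mul_one]
    rw [this, Complex.exp_pi_mul_I]
  -- conj ζ = ζ⁻¹
  have hconj : (starRingEnd ℂ) ζ = ζ⁻¹ := by
    rw [hζ, ← Complex.exp_conj, ← Complex.exp_neg]
    congr 1
    simp only [map_div₀, map_mul, Complex.conj_I, Complex.conj_ofReal, map_natCast]
    ring
  -- conj (ζ^k) = -ζ^(2p-k) for k ≤ 2p
  have hconjpow : ∀ k ≤ 2*p, (starRingEnd ℂ) (ζ^k) = -ζ^(2*p-k) := by
    intro k hk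
    rw [map_pow, hconj, inv_pow]
    have h1 : ζ^k * (-ζ^(2*p-k)) = 1 := by
      rw [mul_neg, ← pow_add]
      have : k + (2*p - k) = 2*p := by omega
      rw [this, hζ2p]; ring
    field_simp
    field_simp at h1
    linear_combination -h1
  -- the "pair sum" sequence
  set s : ℕ → ℤ := fun k => ρ.coeff k + ρ.coeff (2*p - k) with hs
  have hstop : s 0 = 0 ∧ s (2*p) = 0 := by
    constructor
    · simp [hs, hconst, Polynomial.coeff_eq_zero_of_natDegree_lt hdeg]
    · simp [hs, hconst, Polynomial.coeff_eq_zero_of_natDegree_lt hdeg]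
  obtain ⟨r, hr⟩ := hreal
  have haev : Polynomial.aeval ζ ρ = ∑ i ∈ range (2*p), (ρ.coeff i : ℂ) * ζ^i := by
    rw [Polynomial.aeval_eq_sum_range' hdeg]
    refine Finset.sum_congr rfl fun i _ => ?_
    simp [zsmul_eq_mul]
  have hsum : ∑ k ∈ range (2*p+1), (s k : ℂ) * ζ^k = 0 := by
    have hsplit : ∑ k ∈ range (2*p+1), (s k : ℂ) * ζ^k
        = ∑ k ∈ range (2*p+1), (ρ.coeff k : ℂ) * ζ^k
          + ∑ k ∈ range (2*p+1), (ρ.coeff (2*p - k) : ℂ) * ζ^k := by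
      rw [← Finset.sum_add_distrib]
      refine Finset.sum_congr rfl fun k _ => ?_
      simp [hs]
      push_cast
      ring
    have h1 : ∑ k ∈ range (2*p+1), (ρ.coeff k : ℂ) * ζ^k = (r : ℂ) := by
      rw [Finset.sum_range_succ, Polynomial.coeff_eq_zero_of_natDegree_lt hdeg, ← hr, haev]
      simp
    have h2 : ∑ k ∈ range (2*p+1), (ρ.coeff (2*p - k) : ℂ) * ζ^k = -(r : ℂ) := by
      have hrefl := Finset.sum_range_reflect (fun k => (ρ.coeff k : ℂ) * ζ^(2*p - k)) (2*p+1)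
      have hre : ∀ k ∈ range (2*p+1), (ρ.coeff (2*p+1-1-k) : ℂ) * ζ^(2*p - (2*p+1-1-k))
          = (ρ.coeff (2*p - k) : ℂ) * ζ^k := by
        intro k hk
        rw [Finset.mem_range] at hk
        congr 2
        omega
      rw [Finset.sum_congr rfl hre] at hrefl
      rw [hrefl]
      have hcs : ∀ k ∈ range (2*p+1), (ρ.coeff k : ℂ) * ζ^(2*p-k)
          = -((starRingEnd ℂ) ((ρ.coeff k : ℂ) * ζ^k)) := by
        intro k hk
        rw [Finset.mem_range] at hk
        rw [map_mul, map_intCast, hconjpow k (by omega)]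
        ring
      rw [Finset.sum_congr rfl hcs, Finset.sum_neg_distrib, ← map_sum, h1]
      simp
    rw [hsplit, h1, h2]
    ring
  -- the candidate minimal polynomial P = ∑ (-1)^j X^(2j)
  set P : ℚ[X] := ∑ j ∈ range p, C ((-1 : ℚ)^j) * X^(2*j) with hPdef
  have hPcoeff : ∀ m, P.coeff m = if m % 2 = 0 ∧ m / 2 < p then (-1 : ℚ)^(m/2) else 0 := by
    intro m
    rw [hPdef, Polynomial.finset_sum_coeff]
    simp only [Polynomial.coeff_C_mul, Polynomial.coeff_X_pow]
    by_cases h : m % 2 = 0 ∧ m / 2 < p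
    · rw [if_pos h]
      rw [Finset.sum_eq_single (m/2)]
      · rw [if_pos (by omega)]; ring
      · intro j hj hne
        rw [if_neg (by omega), mul_zero]
      · intro hm
        exact absurd (Finset.mem_range.mpr h.2) hm
    · rw [if_neg h]
      refine Finset.sum_eq_zero fun j hj => ?_
      rw [Finset.mem_range] at hj
      rw [if_neg (by omega), mul_zero]
  have hPdeg : P.natDegree = 2*p - 2 := by
    have hle : P.natDegree ≤ 2*p - 2 := by
      rw [Polynomial.natDegree_le_iff_coeff_eq_zero]
      intro m hm
      rw [hPcoeff]
      rw [if_neg (by omega)]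
    have hne : P.coeff (2*p-2) ≠ 0 := by
      rw [hPcoeff, if_pos (by omega)]
      exact pow_ne_zero _ (by norm_num)
    exact le_antisymm hle (Polynomial.le_natDegree_of_ne_zero hne)
  have hPmonic : P.Monic := by
    unfold Polynomial.Monic Polynomial.leadingCoeff
    rw [hPdeg, hPcoeff, if_pos (by omega)]
    have : (2*p-2)/2 = p - 1 := by omega
    rw [this]
    exact Even.neg_one_pow (Nat.Odd.sub_odd hodd odd_one)
  have hPζ : Polynomial.aeval ζ P = 0 := by
    rw [hPdef]
    rw [map_sum]
    have hre : ∀ j ∈ range p, Polynomial.aeval ζ (C ((-1:ℚ)^j) * X^(2*j)) = (-ζ^2)^j := by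
      intro j hj
      simp only [map_mul, Polynomial.aeval_C, map_pow, Polynomial.aeval_X]
      conv_rhs => rw [neg_pow]
      rw [pow_mul]
      simp
    rw [Finset.sum_congr rfl hre]
    have hne1 : -ζ^2 ≠ 1 := by
      intro h
      have h4 : ζ^4 = 1 := by
        have : ζ^2 = -1 := by linear_combination -h
        rw [show (4:ℕ) = 2*2 by rfl, pow_mul, this]; ring
      have hdvd := hζprim.dvd_of_pow_eq_one 4 h4
      have := Nat.le_of_dvd (by norm_num) hdvd
      omega
    rw [geom_sum_eq hne1]
    have hone : (-ζ^2)^p = 1 := by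
      rw [neg_pow, ← pow_mul, hζ2p, hodd.neg_one_pow]
      ring
    rw [hone]
    simp
  -- P is the minimal polynomial of ζ
  have hminP : minpoly ℚ ζ = P := by
    have hdvdP : minpoly ℚ ζ ∣ P := minpoly.dvd ℚ ζ hPζ
    have hmmonic : (minpoly ℚ ζ).Monic :=
      minpoly.monic (IsIntegral.tower_top (hζprim.isIntegral (by omega)))
    have hmdeg : (minpoly ℚ ζ).natDegree = 2*p - 2 := by
      rw [← cyclotomic_eq_minpoly_rat hζprim (by omega), Polynomial.natDegree_cyclotomic]
      have hcop : Nat.Coprime 4 p := by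
        have : Nat.Coprime 2 p := (Nat.coprime_primes Nat.prime_two hp).mpr
          (by intro h; rw [← h] at hodd; exact (by decide : ¬ Odd 2) hodd)
        simpa [show (4:ℕ) = 2^2 by rfl] using this.pow_left 2
      rw [Nat.totient_mul hcop, Nat.totient_prime hp]
      have h4 : Nat.totient 4 = 2 := by decide
      rw [h4]
      omega
    exact (Polynomial.eq_of_monic_of_dvd_of_natDegree_le hmmonic hPmonic hdvdP
      (by rw [hmdeg, hPdeg])).symm
  -- the pair-sum polynomial σ
  set σ : ℚ[X] := ∑ k ∈ range (2*p+1), C ((s k : ℚ)) * X^k with hσdef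
  have hσcoeff : ∀ m, σ.coeff m = if m < 2*p+1 then (s m : ℚ) else 0 := by
    intro m
    rw [hσdef, Polynomial.finset_sum_coeff]
    simp only [Polynomial.coeff_C_mul, Polynomial.coeff_X_pow]
    by_cases h : m < 2*p+1
    · rw [if_pos h, Finset.sum_eq_single m]
      · rw [if_pos rfl]; ring
      · intro j hj hne; rw [if_neg (by omega), mul_zero]
      · intro hm; exact absurd (Finset.mem_range.mpr h) hm
    · rw [if_neg h]
      refine Finset.sum_eq_zero fun j hj => ?_
      rw [Finset.mem_range] at hj
      rw [if_neg (by omega), mul_zero]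
  have hσζ : Polynomial.aeval ζ σ = 0 := by
    rw [hσdef, map_sum, ← hsum]
    refine Finset.sum_congr rfl fun k _ => ?_
    rw [map_mul, Polynomial.aeval_C, map_pow, Polynomial.aeval_X]
    congr 1
  have hPσ : P ∣ σ := hminP ▸ minpoly.dvd ℚ ζ hσζ
  -- extract the linear quotient; conclude coefficient relations
  have hmain : ∃ a : ℚ, ∀ n, σ.coeff (n+1) = a * P.coeff n := by
    obtain ⟨q, hq⟩ := hPσ
    by_cases hσ0 : σ = 0
    · exact ⟨0, fun n => by rw [hσ0]; simp⟩
    have hq0 : q ≠ 0 := fun h => hσ0 (by rw [hq, h, mul_zero])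
    have hσdeg : σ.natDegree ≤ 2*p - 1 := by
      rw [Polynomial.natDegree_le_iff_coeff_eq_zero]
      intro m hm
      rw [hσcoeff]
      by_cases h : m < 2*p+1
      · rw [if_pos h]
        have hm2p : m = 2*p := by omega
        subst hm2p
        norm_cast
        simp only [hs]
        rw [Polynomial.coeff_eq_zero_of_natDegree_lt hdeg, Nat.sub_self, hconst]
        norm_num
      · rw [if_neg h]
    have hqdeg : q.natDegree ≤ 1 := by
      have := Polynomial.natDegree_mul (hPmonic.ne_zero) hq0
      rw [← hq] at this
      omega
    have hqform := Polynomial.eq_X_add_C_of_natDegree_le_one hqdeg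
    have hb0 : q.coeff 0 = 0 := by
      have h0 : σ.coeff 0 = 0 := by
        rw [hσcoeff, if_pos (by omega)]
        norm_cast
        exact hstop.1
      rw [hq, Polynomial.mul_coeff_zero] at h0
      have hP0 : P.coeff 0 = 1 := by rw [hPcoeff, if_pos (by omega)]; norm_num
      rw [hP0, one_mul] at h0
      exact h0
    refine ⟨q.coeff 1, fun n => ?_⟩
    have hq' : σ = C (q.coeff 1) * P * X := by
      conv_lhs => rw [hq]
      conv_lhs => rw [hqform]
      rw [hb0, C_0, add_zero]
      ring
    rw [hq', Polynomial.coeff_mul_X, Polynomial.coeff_C_mul]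
  obtain ⟨a, ha⟩ := hmain
  -- a is the integer c = s 1
  have ha1 : (s 1 : ℚ) = a := by
    have := ha 0
    rw [hσcoeff, if_pos (by omega), hPcoeff, if_pos (by omega)] at this
    simpa using this
  refine ⟨s 1, fun j hj => ?_, fun j hj1 hjp => ?_⟩
  · have h := ha (2*j)
    rw [hσcoeff, if_pos (by omega), hPcoeff, if_pos (by omega), ← ha1] at h
    rw [show (2*j)/2 = j by omega] at h
    have h4 : s (2*j+1) = (-1)^j * s 1 := by
      have h5 : ((s (2*j+1) : ℚ)) = (((-1)^j * s 1 : ℤ) : ℚ) := by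
        push_cast
        rw [h]
        ring
      exact_mod_cast h5
    simpa [hs] using h4
  · have h := ha (2*j-1)
    rw [show 2*j-1+1 = 2*j by omega] at h
    rw [hσcoeff, if_pos (by omega), hPcoeff, if_neg (by omega), mul_zero] at h
    have h4 : s (2*j) = 0 := by exact_mod_cast h
    simpa [hs] using h4

open Polynomial in
/-- Lower bound on non-pairing-off resonances for `N = 2p`: if `ρ` is an integer
polynomial of degree `< N` with zero constant term, `ρ(ζ) ∈ ℝ` for
`ζ = exp(iπ/N)`, `ρ'(1) ≡ 0 (mod N)`, and `ρ` is not trivially real, then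
`M(ρ) = ∑ |ρ_k| ≥ N`. -/
theorem non_pairing_off_lower_bound (p : ℕ) (hp : p.Prime) (hodd : Odd p)
    (N : ℕ) (hN : N = 2 * p) (ζ : ℂ)
    (hζ : ζ = Complex.exp (Real.pi * Complex.I / N)) (ρ : ℤ[X])
    (hdeg : ρ.natDegree < N) (hconst : ρ.coeff 0 = 0)
    (hreal : ∃ r : ℝ, Polynomial.aeval ζ ρ = (r : ℂ))
    (hmom : (N : ℤ) ∣ ρ.derivative.eval 1)
    (hnontriv : ¬ ∃ lam : ℕ → ℤ,
      ρ = ∑ k ∈ Finset.Icc 1 (p - 1), C (lam k) * (X ^ k - X ^ (N - k))) :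
    N ≤ ∑ k ∈ Finset.range N, (ρ.coeff k).natAbs := by
  subst hN
  have hp3 : 3 ≤ p := by
    have h2 := hp.two_le
    rcases Nat.lt_or_ge p 3 with h | h
    · interval_cases p
      exact absurd hodd (by decide)
    · exact h
  obtain ⟨c, hoddpair, hevenpair⟩ := key p hp hodd ζ hζ ρ hdeg hconst hreal
  obtain ⟨m, hmdef⟩ := hodd
  have hodd' : Odd p := ⟨m, hmdef⟩
  -- the middle coefficient relation : 2 * ρ_p = (-1)^m * c
  have hmid : 2 * ρ.coeff p = (-1)^m * c := by
    have h := hoddpair m (by omega)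
    rw [show 2*m+1 = p by omega, show 2*p - p = p by omega] at h
    linarith [h]
  -- ρ_p ≠ 0, else ρ would be trivially real
  have hρp : ρ.coeff p ≠ 0 := by
    intro hρp0
    have hc0 : c = 0 := by
      rcases Nat.even_or_odd m with he | ho
      · rw [he.neg_one_pow] at hmid; omega
      · rw [ho.neg_one_pow] at hmid; omega
    have hpair : ∀ k, 1 ≤ k → k ≤ 2*p-1 → ρ.coeff k + ρ.coeff (2*p-k) = 0 := by
      intro k hk1 hk2
      rcases Nat.even_or_odd k with he | ho
      · obtain ⟨j, hj⟩ := he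
        have h := hevenpair j (by omega) (by omega)
        rw [show 2*j = k by omega] at h
        exact h
      · obtain ⟨j, hj⟩ := ho
        have h := hoddpair j (by omega)
        rw [show 2*j+1 = k by omega, hc0, mul_zero] at h
        exact h
    refine hnontriv ⟨fun k => ρ.coeff k, ?_⟩
    ext n
    rw [Polynomial.finset_sum_coeff]
    simp only [Polynomial.coeff_C_mul, Polynomial.coeff_sub, Polynomial.coeff_X_pow]
    by_cases h1 : 1 ≤ n ∧ n ≤ p - 1
    · rw [Finset.sum_eq_single n]
      · rw [if_pos rfl, if_neg (by omega)]; ring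
      · intro k hk hne
        rw [Finset.mem_Icc] at hk
        rw [if_neg (by omega), if_neg (by omega)]
        ring
      · intro hn
        exact absurd (Finset.mem_Icc.mpr (by omega)) hn
    · by_cases h2 : p + 1 ≤ n ∧ n ≤ 2*p - 1
      · rw [Finset.sum_eq_single (2*p - n)]
        · rw [if_neg (by omega), if_pos (by omega)]
          have := hpair (2*p - n) (by omega) (by omega)
          rw [show 2*p - (2*p - n) = n by omega] at this
          linarith [this]
        · intro k hk hne
          rw [Finset.mem_Icc] at hk
          rw [if_neg (by omega), if_neg (by omega)]
          ring
        · intro hn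
          exact absurd (Finset.mem_Icc.mpr (by omega)) hn
      · have hz : ∑ k ∈ Finset.Icc 1 (p-1),
            ρ.coeff k * ((if n = k then (1:ℤ) else 0) - if n = 2*p - k then 1 else 0) = 0 := by
          refine Finset.sum_eq_zero fun k hk => ?_
          rw [Finset.mem_Icc] at hk
          by_cases hn2p : 2*p ≤ n
          · rw [if_neg (by omega), if_neg (by omega)]; ring
          · rw [if_neg (by omega), if_neg (by omega)]; ring
        rw [hz]
        by_cases hn0 : n = 0
        · rw [hn0, hconst]
        · by_cases hnp : n = p
          · rw [hnp, hρp0]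
          · exact Polynomial.coeff_eq_zero_of_natDegree_lt (by omega)
  -- parity: from the moment condition, the alternating structure forces 4 ∣ c
  have hA : 2*(∑ j ∈ Finset.range p, ρ.coeff (2*j+1)) = c := by
    have hrefl := Finset.sum_range_reflect (fun j => ρ.coeff (2*j+1)) p
    have h1 : ∑ j ∈ Finset.range p, (ρ.coeff (2*j+1) + ρ.coeff (2*(p-1-j)+1))
        = ∑ j ∈ Finset.range p, (-1:ℤ)^j * c := by
      refine Finset.sum_congr rfl fun j hj => ?_
      rw [Finset.mem_range] at hj
      rw [show 2*(p-1-j)+1 = 2*p - (2*j+1) by omega]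
      exact hoddpair j hj
    rw [Finset.sum_add_distrib] at h1
    rw [hrefl, ← Finset.sum_mul, neg_one_geom_sum, if_neg (Nat.not_even_iff_odd.mpr hodd')] at h1
    linarith [h1]
  have hdiv2 : (2:ℤ) ∣ ∑ j ∈ Finset.range p, ρ.coeff (2*j+1) := by
    have hev := deriv_eval_one ρ (2*p) hdeg
    rw [sum_range_two_mul (fun i => ρ.coeff i * i) p] at hev
    have h2 : ∑ j ∈ Finset.range p, ρ.coeff (2*j) * (2*j : ℕ)
        = 2 * ∑ j ∈ Finset.range p, ρ.coeff (2*j) * j := by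
      rw [Finset.mul_sum]
      refine Finset.sum_congr rfl fun j _ => ?_
      push_cast
      ring
    have h3 : ∑ j ∈ Finset.range p, ρ.coeff (2*j+1) * (2*j+1 : ℕ)
        = 2 * (∑ j ∈ Finset.range p, ρ.coeff (2*j+1) * j) + ∑ j ∈ Finset.range p, ρ.coeff (2*j+1) := by
      rw [Finset.mul_sum, ← Finset.sum_add_distrib]
      refine Finset.sum_congr rfl fun j _ => ?_
      push_cast
      ring
    have hdvd : (2:ℤ) ∣ ρ.derivative.eval 1 := dvd_trans ⟨p, by push_cast; ring⟩ hmom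
    rw [hev, h2, h3] at hdvd
    omega
  have hc4 : (4:ℤ) ∣ c := by omega
  have hcne : c ≠ 0 := by
    intro h
    rcases Nat.even_or_odd m with he | ho
    · rw [he.neg_one_pow, h] at hmid; omega
    · rw [ho.neg_one_pow, h] at hmid; omega
  have hcabs : 4 ≤ c.natAbs := by omega
  -- the lower bound
  have hB : 4*p ≤ 2 * ∑ j ∈ Finset.range p, (ρ.coeff (2*j+1)).natAbs := by
    have hrefl := Finset.sum_range_reflect (fun j => (ρ.coeff (2*j+1)).natAbs) p
    have h1 : ∀ j ∈ Finset.range p,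
        c.natAbs ≤ (ρ.coeff (2*j+1)).natAbs + (ρ.coeff (2*(p-1-j)+1)).natAbs := by
      intro j hj
      rw [Finset.mem_range] at hj
      have h := hoddpair j hj
      rw [show 2*p - (2*j+1) = 2*(p-1-j)+1 by omega] at h
      calc c.natAbs = ((-1:ℤ)^j * c).natAbs := by
            rw [Int.natAbs_mul, Int.natAbs_pow]
            simp
        _ = (ρ.coeff (2*j+1) + ρ.coeff (2*(p-1-j)+1)).natAbs := by rw [h]
        _ ≤ _ := Int.natAbs_add_le _ _
    calc 4*p = p * 4 := by ring
      _ ≤ p * c.natAbs := Nat.mul_le_mul_left p hcabs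
      _ = ∑ _j ∈ Finset.range p, c.natAbs := by rw [Finset.sum_const, Finset.card_range, smul_eq_mul, mul_comm]
      _ ≤ ∑ j ∈ Finset.range p, ((ρ.coeff (2*j+1)).natAbs + (ρ.coeff (2*(p-1-j)+1)).natAbs) :=
          Finset.sum_le_sum h1
      _ = (∑ j ∈ Finset.range p, (ρ.coeff (2*j+1)).natAbs)
          + ∑ j ∈ Finset.range p, (ρ.coeff (2*(p-1-j)+1)).natAbs := Finset.sum_add_distrib
      _ = 2 * ∑ j ∈ Finset.range p, (ρ.coeff (2*j+1)).natAbs := by rw [hrefl]; ring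
  rw [sum_range_two_mul (fun i => (ρ.coeff i).natAbs) p]
  omega
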